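/- The total number of cards where the ordered partition (q_1, q_2, ..., q_k) appears on the left (i.e., the number of embeddings of (q_1,...,q_k) into some ordered partition, including the trivial embedding) equals 1 + ((q_1+2k-2)/(q_1+k-1)) · C(q_1+k-1, k-1) · 2^{q_1-1}. -/

import Mathlib

open Finset

section Aux

lemma lemI (N s : ℕ) (h : s ≤ N) :
    ∑ j ∈ range (N+1), N.choose j * j.choose s = N.choose s * 2^(N-s) := by
  rw [← Finset.sum_subset (s₁ := Finset.Ico s (N+1))
    (fun j hj => mem_range.2 (mem_Ico.1 hj).2)
    (by intro j hj hj2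
        rw [mem_range] at hj; rw [mem_Ico, not_and] at hj2
        have : j < s := by by_contra hc; exact absurd hj (by simpa using hj2 (by omega))
        rw [Nat.choose_eq_zero_of_lt this, Nat.mul_zero])]
  rw [Finset.sum_Ico_eq_sum_range]
  have : ∀ i ∈ range (N+1-s), N.choose (s+i) * (s+i).choose s = N.choose s * (N-s).choose i := by
    intro i hi
    rw [mem_range] at hi
    rw [Nat.choose_mul (by omega)]
    simp
  rw [Finset.sum_congr rfl this, ← Finset.mul_sum]
  have h2 : N+1-s = (N-s)+1 := by omega
  rw [h2, Nat.sum_range_choose]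

lemma stepF0 (q₁ : ℕ) (hq₁ : 1 ≤ q₁) :
    ∑ j ∈ range (q₁-1+1), (q₁-1).choose j * (j+1).choose 0 = 2^(q₁-1) := by
  simp [Nat.sum_range_choose]

lemma stepF (q₁ s : ℕ) (hq₁ : 1 ≤ q₁) :
    (q₁+s+1) * ∑ j ∈ range (q₁+s+1), (q₁+s).choose j * (j+1).choose (s+1)
      = (q₁+2*s+2) * (q₁+s+1).choose (s+1) * 2^(q₁-1) := by
  have hsplit : ∀ j ∈ range (q₁+s+1), (q₁+s).choose j * (j+1).choose (s+1)
      = (q₁+s).choose j * j.choose s + (q₁+s).choose j * j.choose (s+1) := by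
    intro j _; rw [Nat.choose_succ_succ, Nat.mul_add]
  rw [Finset.sum_congr rfl hsplit, Finset.sum_add_distrib,
    lemI (q₁+s) s (by omega), lemI (q₁+s) (s+1) (by omega)]
  have e1 : q₁ + s - s = q₁ := by omega
  have e2 : q₁ + s - (s+1) = q₁ - 1 := by omega
  rw [e1, e2]
  have hP : (q₁+s+1).choose (s+1) = (q₁+s).choose s + (q₁+s).choose (s+1) :=
    Nat.choose_succ_succ _ _
  have hkey : (q₁+s).choose (s+1) * (s+1) = (q₁+s).choose s * q₁ := by
    have := Nat.choose_succ_right_eq (q₁+s) s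
    rwa [Nat.add_sub_cancel] at this
  have e3 : 2^q₁ = 2 * 2^(q₁-1) := by
    conv_lhs => rw [show q₁ = (q₁ - 1) + 1 by omega]
    rw [pow_succ]; ring
  rw [hP, e3]
  set A := (q₁+s).choose (s+1)
  set B := (q₁+s).choose s
  set x := 2^(q₁-1)
  have hc : (q₁+s+1)*(2*B+A) = (q₁+2*s+2)*(B+A) := by
    zify at hkey ⊢
    linear_combination (-1 : ℤ)*hkey
  calc (q₁+s+1) * (B*(2*x)+A*x) = ((q₁+s+1)*(2*B+A))*x := by ring
    _ = ((q₁+2*s+2)*(B+A))*x := by rw [hc]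
    _ = (q₁+2*s+2)*(B+A)*x := by ring

private def emb1 (n : ℕ) (j : Fin (n-1)) : Fin (n+1) := ⟨(j:ℕ)+1, by have := j.2; omega⟩

lemma casLength (n : ℕ) (hn : 1 ≤ n) (S : Finset (Fin (n-1))) :
    ((compositionAsSetEquiv n).symm S).length = S.card + 1 := by
  have hb : ((compositionAsSetEquiv n).symm S).boundaries
      = insert (0 : Fin (n+1)) (insert (Fin.last n) (S.image (emb1 n))) := by
    ext i
    show i ∈ Set.toFinset _ ↔ _
    simp only [Set.mem_toFinset, Set.mem_setOf_eq, Finset.mem_insert, Finset.mem_image]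
    constructor
    · rintro (h | h | ⟨j, hj, hji⟩)
      · exact Or.inl h
      · exact Or.inr (Or.inl h)
      · exact Or.inr (Or.inr ⟨j, hj, by rw [Fin.ext_iff]; simp [emb1]; omega⟩)
    · rintro (h | h | ⟨j, hj, hji⟩)
      · exact Or.inl h
      · exact Or.inr (Or.inl h)
      · refine Or.inr (Or.inr ⟨j, hj, ?_⟩)
        rw [Fin.ext_iff] at hji; simp [emb1] at hji; omega
  have hlen := ((compositionAsSetEquiv n).symm S).card_boundaries_eq_succ_length
  rw [hb] at hlen
  have hinj : Function.Injective (emb1 n) := by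
    intro a b hab
    rw [Fin.ext_iff] at hab ⊢
    simpa [emb1] using hab
  have h0 : (0 : Fin (n+1)) ∉ insert (Fin.last n) (S.image (emb1 n)) := by
    simp only [Finset.mem_insert, Finset.mem_image, not_or, not_exists]
    refine ⟨by rw [Fin.ext_iff]; simp; omega, ?_⟩
    intro j
    rw [not_and]
    intro hj
    rw [Fin.ext_iff]; simp [emb1]
  have h1 : (Fin.last n) ∉ S.image (emb1 n) := by
    simp only [Finset.mem_image, not_exists]
    intro j
    rw [not_and]
    intro hj
    rw [Fin.ext_iff]; simp only [Fin.val_last, emb1]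
    have := j.2; omega
  rw [Finset.card_insert_of_notMem h0, Finset.card_insert_of_notMem h1,
    Finset.card_image_of_injective _ hinj] at hlen
  omega

lemma stepD (n : ℕ) (hn : 1 ≤ n) (k' : ℕ) :
    ∑ c : Composition n, (c.length).choose k'
      = ∑ j ∈ range (n-1+1), (n-1).choose j * (j+1).choose k' := by
  rw [← Equiv.sum_comp ((compositionAsSetEquiv n).symm.trans (compositionEquiv n).symm)
    (fun c => (c.length).choose k')]
  have hlen : ∀ S : Finset (Fin (n-1)),
      ((((compositionAsSetEquiv n).symm.trans (compositionEquiv n).symm)) S).length = S.card + 1 := by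
    intro S
    rw [Equiv.trans_apply]
    show (((compositionAsSetEquiv n).symm S).toComposition).length = _
    rw [CompositionAsSet.toComposition_length, casLength n hn]
  rw [Finset.sum_congr rfl (fun S _ => by rw [hlen S])]
  rw [← Finset.powerset_univ, Finset.sum_powerset_apply_card (fun m => (m+1).choose k')]
  simp [card_univ, smul_eq_mul]



namespace LCC

def dsum {k : ℕ} (w g : Fin k → ℕ) (i : ℕ) : ℕ := ∑ j, if g j = i then w j else 0

lemma dsum_apply {k : ℕ} (w g : Fin k → ℕ) (hg : Function.Injective g) (j : Fin k) :
    dsum w g (g j) = w j := by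
  rw [dsum, Finset.sum_eq_single j]
  · simp
  · intro b _ hbj
    rw [if_neg (fun h => hbj (hg h))]
  · simp

lemma dsum_eq_zero {k : ℕ} {w g : Fin k → ℕ} {i : ℕ} (h : ∀ j, g j ≠ i) : dsum w g i = 0 :=
  Finset.sum_eq_zero (fun j _ => if_neg (h j))

lemma sum_dsum {k m : ℕ} (w g : Fin k → ℕ) (h : ∀ j, g j < m) :
    ∑ i : Fin m, dsum w g i.val = ∑ j, w j := by
  unfold dsum
  rw [Finset.sum_comm]
  refine Finset.sum_congr rfl (fun j _ => ?_)
  rw [Finset.sum_eq_single (⟨g j, h j⟩ : Fin m)]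
  · simp
  · intro i _ hij
    refine if_neg (fun hh => hij ?_)
    exact Fin.ext hh.symm
  · simp

lemma sum_get (L : List ℕ) : ∑ i : Fin L.length, L.get i = L.sum := by
  conv_rhs => rw [← List.ofFn_get L]
  rw [List.sum_ofFn]

lemma getD_ofFn {m : ℕ} (f : Fin m → ℕ) (i : ℕ) (h : i < m) :
    (List.ofFn f).getD i 0 = f ⟨i, h⟩ := by
  rw [List.getD_eq_getElem (_) _ (by simpa using h), List.getElem_ofFn]

lemma getD_eq_get (L : List ℕ) (i : ℕ) (h : i < L.length) :
    L.getD i 0 = L.get ⟨i, h⟩ := by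
  rw [List.getD_eq_getElem _ _ h]
  rfl

lemma sum_getD (L : List ℕ) : ∑ i : Fin L.length, L.getD i.val 0 = L.sum :=
  (Finset.sum_congr rfl fun i _ => getD_eq_get L i.val i.2).trans (sum_get L)

lemma listExt (L1 L2 : List ℕ) (h : L1.length = L2.length)
    (hg : ∀ i < L1.length, L1.getD i 0 = L2.getD i 0) : L1 = L2 := by
  apply List.ext_getElem h
  intro i h1 h2
  have := hg i h1
  rwa [getD_eq_get _ _ h1, getD_eq_get _ _ h2] at this

def mkComp (N m : ℕ) (f : Fin m → ℕ) (hpos : ∀ i, 0 < f i) (hsum : ∑ i, f i = N) :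
    Composition N where
  blocks := List.ofFn f
  blocks_pos := by
    intro i hi
    rw [List.mem_ofFn] at hi
    obtain ⟨j, rfl⟩ := hi
    exact hpos j
  blocks_sum := by rw [List.sum_ofFn, hsum]

lemma mkComp_length (N m f hpos hsum) : (mkComp N m f hpos hsum).blocks.length = m :=
  List.length_ofFn

lemma mkComp_getD (N m f hpos hsum) (i : ℕ) (h : i < m) :
    (mkComp N m f hpos hsum).blocks.getD i 0 = f ⟨i, h⟩ := getD_ofFn f i h

lemma getD_pos {N : ℕ} (c : Composition N) (i : ℕ) (h : i < c.blocks.length) :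
    0 < c.blocks.getD i 0 := by
  rw [getD_eq_get _ _ h]
  exact c.blocks_pos (List.get_mem _ _)

lemma len_le_sum (t : List ℕ) (ht : ∀ x ∈ t, 0 < x) : t.length ≤ t.sum := by
  calc t.length = ∑ _j : Fin t.length, 1 := by simp
  _ ≤ ∑ j : Fin t.length, t.get j :=
    Finset.sum_le_sum (fun j _ => ht _ (List.get_mem _ _))
  _ = t.sum := sum_get t

def wt (t : List ℕ) : Fin t.length → ℕ := fun j => t.get j - 1

lemma sum_wt (t : List ℕ) (ht : ∀ x ∈ t, 0 < x) :
    ∑ j, wt t j = t.sum - t.length := by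
  unfold wt
  rw [Finset.sum_tsub_distrib _ (fun j _ => ht _ (List.get_mem _ _)), sum_get]
  simp

lemma t_get_pos (t : List ℕ) (ht : ∀ x ∈ t, 0 < x) (j : Fin t.length) : 0 < t.get j :=
  ht _ (List.get_mem _ _)

section Main

variable (t : List ℕ) (q₁ b : ℕ)

def PP (r : Composition b) (g : Fin t.length → ℕ) : Prop :=
  (∀ i j, i < j → g i < g j) ∧ ∀ j, g j < r.blocks.length ∧ t.get j ≤ r.blocks.getD (g j) 0

abbrev QQ (c : Composition (q₁ + t.length)) (S : Finset ℕ) : Prop :=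
  S ∈ Finset.powersetCard t.length (Finset.range c.blocks.length)

variable {t q₁ b}

lemma PP_inj {r : Composition b} {g : Fin t.length → ℕ} (h : PP t b r g) :
    Function.Injective g := by
  intro i j hij
  by_contra hne
  rcases lt_trichotomy i j with h1 | h1 | h1
  · exact absurd hij (Nat.ne_of_lt (h.1 i j h1))
  · exact hne h1
  · exact absurd hij.symm (Nat.ne_of_lt (h.1 j i h1))

lemma dlt (ht : ∀ x ∈ t, 0 < x) {r : Composition b} {g : Fin t.length → ℕ}
    (hP : PP t b r g) (i : ℕ) (hi : i < r.blocks.length) :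
    dsum (wt t) g i < r.blocks.getD i 0 := by
  by_cases hex : ∃ j, g j = i
  · obtain ⟨j, hj⟩ := hex
    rw [← hj, dsum_apply _ _ (PP_inj hP)]
    have h1 := (hP.2 j).2
    have h2 := t_get_pos t ht j
    rw [wt]
    omega
  · push_neg at hex
    rw [dsum_eq_zero hex]
    exact getD_pos r i hi

lemma fwd_sum (ht : ∀ x ∈ t, 0 < x) (hb : q₁ + t.sum = b) {r : Composition b}
    {g : Fin t.length → ℕ} (hP : PP t b r g) :
    ∑ i : Fin r.blocks.length, (r.blocks.getD i.val 0 - dsum (wt t) g i.val)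
      = q₁ + t.length := by
  rw [Finset.sum_tsub_distrib _ (fun i _ => le_of_lt (dlt ht hP i.val i.2))]
  have h1 : ∑ i : Fin r.blocks.length, r.blocks.getD i.val 0 = b := by
    rw [sum_getD, r.blocks_sum]
  have h2 : ∑ i : Fin r.blocks.length, dsum (wt t) g i.val = ∑ j, wt t j :=
    sum_dsum _ _ (fun j => (hP.2 j).1)
  have h3 := sum_wt t ht
  have h4 := len_le_sum t ht
  omega

def fwdComp (ht : ∀ x ∈ t, 0 < x) (hb : q₁ + t.sum = b) {r : Composition b}
    {g : Fin t.length → ℕ} (hP : PP t b r g) : Composition (q₁ + t.length) :=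
  mkComp _ r.blocks.length (fun i => r.blocks.getD i.val 0 - dsum (wt t) g i.val)
    (fun i => Nat.sub_pos_of_lt (dlt ht hP i.val i.2)) (fwd_sum ht hb hP)

lemma fwd_QQ (ht : ∀ x ∈ t, 0 < x) (hb : q₁ + t.sum = b) {r : Composition b}
    {g : Fin t.length → ℕ} (hP : PP t b r g) :
    QQ t q₁ (fwdComp ht hb hP) (Finset.image g Finset.univ) := by
  rw [QQ, Finset.mem_powersetCard]
  constructor
  · intro x hx
    rw [Finset.mem_image] at hx
    obtain ⟨j, _, rfl⟩ := hx
    rw [Finset.mem_range, fwdComp, mkComp_length]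
    exact (hP.2 j).1
  · rw [Finset.card_image_of_injective _ (PP_inj hP), card_univ]
    simp

lemma fwdComp_length (ht : ∀ x ∈ t, 0 < x) (hb : q₁ + t.sum = b) {r : Composition b}
    {g : Fin t.length → ℕ} (hP : PP t b r g) :
    (fwdComp ht hb hP).blocks.length = r.blocks.length := mkComp_length _ _ _ _ _

lemma fwdComp_getD (ht : ∀ x ∈ t, 0 < x) (hb : q₁ + t.sum = b) {r : Composition b}
    {g : Fin t.length → ℕ} (hP : PP t b r g) (i : ℕ) (hi : i < r.blocks.length) :
    (fwdComp ht hb hP).blocks.getD i 0 = r.blocks.getD i 0 - dsum (wt t) g i := by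
  rw [fwdComp, mkComp_getD _ _ _ _ _ i hi]

def gB {c : Composition (q₁ + t.length)} {S : Finset ℕ} (hQ : QQ t q₁ c S) :
    Fin t.length → ℕ :=
  fun j => S.orderEmbOfFin (Finset.mem_powersetCard.1 hQ).2 j

lemma gB_mem {c : Composition (q₁ + t.length)} {S : Finset ℕ} (hQ : QQ t q₁ c S)
    (j : Fin t.length) : gB hQ j ∈ S := Finset.orderEmbOfFin_mem _ _ _

lemma gB_lt {c : Composition (q₁ + t.length)} {S : Finset ℕ} (hQ : QQ t q₁ c S)
    (j : Fin t.length) : gB hQ j < c.blocks.length :=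
  Finset.mem_range.1 ((Finset.mem_powersetCard.1 hQ).1 (gB_mem hQ j))

lemma gB_mono {c : Composition (q₁ + t.length)} {S : Finset ℕ} (hQ : QQ t q₁ c S) :
    ∀ i j, i < j → gB hQ i < gB hQ j :=
  fun _ _ hij => (S.orderEmbOfFin (Finset.mem_powersetCard.1 hQ).2).strictMono hij

lemma inj_of_mono {k : ℕ} {g : Fin k → ℕ} (hm : ∀ i j, i < j → g i < g j) :
    Function.Injective g := by
  intro i j hij
  by_contra hne
  rcases lt_trichotomy i j with h1 | h1 | h1
  · exact absurd hij (Nat.ne_of_lt (hm i j h1))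
  · exact hne h1
  · exact absurd hij.symm (Nat.ne_of_lt (hm j i h1))

lemma gB_inj {c : Composition (q₁ + t.length)} {S : Finset ℕ} (hQ : QQ t q₁ c S) :
    Function.Injective (gB hQ) := inj_of_mono (gB_mono hQ)

lemma bwd_sum (ht : ∀ x ∈ t, 0 < x) (hq₁ : 0 < q₁) (hb : q₁ + t.sum = b)
    {c : Composition (q₁ + t.length)} {S : Finset ℕ} (hQ : QQ t q₁ c S) :
    ∑ i : Fin c.blocks.length, (c.blocks.getD i.val 0 + dsum (wt t) (gB hQ) i.val) = b := by
  rw [Finset.sum_add_distrib, sum_getD, c.blocks_sum,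
    sum_dsum _ _ (gB_lt hQ), sum_wt t ht]
  have h4 := len_le_sum t ht
  omega

def bwdComp (ht : ∀ x ∈ t, 0 < x) (hq₁ : 0 < q₁) (hb : q₁ + t.sum = b)
    {c : Composition (q₁ + t.length)} {S : Finset ℕ} (hQ : QQ t q₁ c S) : Composition b :=
  mkComp _ c.blocks.length (fun i => c.blocks.getD i.val 0 + dsum (wt t) (gB hQ) i.val)
    (fun i => Nat.add_pos_left (getD_pos c i.val i.2) _) (bwd_sum ht hq₁ hb hQ)

lemma bwdComp_length (ht : ∀ x ∈ t, 0 < x) (hq₁ : 0 < q₁) (hb : q₁ + t.sum = b)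
    {c : Composition (q₁ + t.length)} {S : Finset ℕ} (hQ : QQ t q₁ c S) :
    (bwdComp ht hq₁ hb hQ).blocks.length = c.blocks.length := mkComp_length _ _ _ _ _

lemma bwdComp_getD (ht : ∀ x ∈ t, 0 < x) (hq₁ : 0 < q₁) (hb : q₁ + t.sum = b)
    {c : Composition (q₁ + t.length)} {S : Finset ℕ} (hQ : QQ t q₁ c S) (i : ℕ)
    (hi : i < c.blocks.length) :
    (bwdComp ht hq₁ hb hQ).blocks.getD i 0 = c.blocks.getD i 0 + dsum (wt t) (gB hQ) i := by
  rw [bwdComp, mkComp_getD _ _ _ _ _ i hi]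

lemma bwd_PP (ht : ∀ x ∈ t, 0 < x) (hq₁ : 0 < q₁) (hb : q₁ + t.sum = b)
    {c : Composition (q₁ + t.length)} {S : Finset ℕ} (hQ : QQ t q₁ c S) :
    PP t b (bwdComp ht hq₁ hb hQ) (gB hQ) := by
  refine ⟨gB_mono hQ, fun j => ?_⟩
  rw [bwdComp_length]
  refine ⟨gB_lt hQ j, ?_⟩
  rw [bwdComp_getD ht hq₁ hb hQ _ (gB_lt hQ j), dsum_apply _ _ (gB_inj hQ)]
  have h1 := getD_pos c (gB hQ j) (gB_lt hQ j)
  have h2 := t_get_pos t ht j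
  simp only [wt]
  omega

def mainEquiv (ht : ∀ x ∈ t, 0 < x) (hq₁ : 0 < q₁) (hb : q₁ + t.sum = b) :
    {p : Composition b × (Fin t.length → ℕ) // PP t b p.1 p.2}
      ≃ {p : Composition (q₁ + t.length) × Finset ℕ // QQ t q₁ p.1 p.2} where
  toFun x := ⟨(fwdComp ht hb x.2, Finset.image x.1.2 Finset.univ), fwd_QQ ht hb x.2⟩
  invFun y := ⟨(bwdComp ht hq₁ hb y.2, gB y.2), bwd_PP ht hq₁ hb y.2⟩
  left_inv := by
    rintro ⟨⟨r, g⟩, hP⟩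
    dsimp only at hP
    apply Subtype.ext
    have hmono : StrictMono g := fun i j hij => hP.1 i j hij
    have hgeq : gB (fwd_QQ ht hb hP) = g := by
      funext j
      have := Finset.orderEmbOfFin_unique
        (Finset.mem_powersetCard.1 (fwd_QQ ht hb hP)).2
        (f := g) (fun x => Finset.mem_image_of_mem _ (Finset.mem_univ x)) hmono
      exact (congrFun this j).symm
    refine Prod.ext ?_ ?_
    · show bwdComp ht hq₁ hb (fwd_QQ ht hb hP) = r
      apply Composition.ext
      apply listExt
      · rw [bwdComp_length, fwdComp_length]
      · intro i hi
        rw [bwdComp_length, fwdComp_length] at hi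
        rw [bwdComp_getD ht hq₁ hb _ i (by rw [fwdComp_length]; exact hi), hgeq,
          fwdComp_getD ht hb hP i hi]
        have := dlt ht hP i hi
        omega
    · exact hgeq
  right_inv := by
    rintro ⟨⟨c, S⟩, hQ⟩
    dsimp only at hQ
    apply Subtype.ext
    refine Prod.ext ?_ ?_
    · show fwdComp ht hb (bwd_PP ht hq₁ hb hQ) = c
      apply Composition.ext
      apply listExt
      · rw [fwdComp_length, bwdComp_length]
      · intro i hi
        rw [fwdComp_length, bwdComp_length] at hi
        rw [fwdComp_getD ht hb _ i (by rw [bwdComp_length]; exact hi),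
          bwdComp_getD ht hq₁ hb hQ i hi]
        omega
    · show Finset.image (gB hQ) Finset.univ = S
      ext x
      rw [Finset.mem_image]
      constructor
      · rintro ⟨j, _, rfl⟩
        exact gB_mem hQ j
      · intro hx
        have hrange := Finset.range_orderEmbOfFin S (Finset.mem_powersetCard.1 hQ).2
        have : x ∈ Set.range (S.orderEmbOfFin (Finset.mem_powersetCard.1 hQ).2) := by
          rw [hrange]; exact hx
        obtain ⟨j, hj⟩ := this
        exact ⟨j, Finset.mem_univ j, hj⟩

end Main

end LCC

namespace LCC

section Count

variable {t : List ℕ} {q₁ b : ℕ}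

def fiberEquiv (t : List ℕ) (b : ℕ) (r : Composition b) :
    {f : Fin t.length → Fin r.blocks.length //
      (∀ i j, i < j → f i < f j) ∧ ∀ j, t.get j ≤ r.blocks.get (f j)}
    ≃ {g : Fin t.length → ℕ // PP t b r g} where
  toFun f := ⟨fun j => (f.1 j : ℕ),
    ⟨fun i j h => f.2.1 i j h, fun j => ⟨(f.1 j).2, by
      rw [getD_eq_get _ _ (f.1 j).2]
      exact f.2.2 j⟩⟩⟩
  invFun g := ⟨fun j => ⟨g.1 j, (g.2.2 j).1⟩,
    ⟨fun i j h => g.2.1 i j h, fun j => by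
      have := (g.2.2 j).2
      rwa [getD_eq_get _ _ (g.2.2 j).1] at this⟩⟩
  left_inv f := by
    apply Subtype.ext
    funext j
    rfl
  right_inv g := by
    apply Subtype.ext
    funext j
    rfl

theorem main_count (ht : ∀ x ∈ t, 0 < x) (hq₁ : 0 < q₁) (hb : q₁ + t.sum = b) :
    ∑ r : Composition b, Fintype.card {f : Fin t.length → Fin r.blocks.length //
        (∀ i j, i < j → f i < f j) ∧ ∀ j, t.get j ≤ r.blocks.get (f j)}
      = ∑ c : Composition (q₁ + t.length), (c.length).choose t.length := by
  classical
  rw [← Fintype.card_sigma]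
  have E : (Σ r : Composition b, {f : Fin t.length → Fin r.blocks.length //
        (∀ i j, i < j → f i < f j) ∧ ∀ j, t.get j ≤ r.blocks.get (f j)})
      ≃ (Σ c : Composition (q₁ + t.length), {S : Finset ℕ // QQ t q₁ c S}) :=
    (Equiv.sigmaCongrRight (fun r => fiberEquiv t b r)).trans
      ((Equiv.subtypeProdEquivSigmaSubtype (PP t b)).symm.trans
        ((mainEquiv ht hq₁ hb).trans
          (Equiv.subtypeProdEquivSigmaSubtype (fun c S => QQ t q₁ c S))))
  rw [Fintype.card_congr E, Fintype.card_sigma]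
  refine Finset.sum_congr rfl (fun c _ => ?_)
  have h1 : Fintype.card {S : Finset ℕ // QQ t q₁ c S}
      = (Finset.powersetCard t.length (Finset.range c.blocks.length)).card :=
    Fintype.card_coe _
  rw [h1, Finset.card_powersetCard, Finset.card_range, Composition.blocks_length]

end Count

end LCC

end Aux

/-- The number of embeddings (trivial or nontrivial) of the ordered partition `q`
into the ordered partition `r`. -/
def embCount {b : ℕ} (q r : Composition b) : ℕ :=
  (if q.blocks = r.blocks then 1 else 0) +
    Fintype.card {f : Fin q.blocks.tail.length → Fin r.blocks.length //
      (∀ i j, i < j → f i < f j) ∧ ∀ j, q.blocks.tail.get j ≤ r.blocks.get (f j)}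

open LCC

/-- The number of cards with the ordered partition `q = (q_1,…,q_k)` on the left,
i.e. the number of embeddings of `q` into some ordered partition of `b`, equals
`1 + ((q_1+2k-2)/(q_1+k-1)) C(q_1+k-1, k-1) 2^(q_1-1)`; stated here after
multiplying both sides by `q_1 + k - 1` to avoid division. -/
theorem left_card_count (b : ℕ) (hb : 1 ≤ b) (q : Composition b) :
    (q.blocks.headI + q.length - 1) * (∑ r : Composition b, embCount q r)
      = (q.blocks.headI + q.length - 1) +
        (q.blocks.headI + 2 * q.length - 2) *
          Nat.choose (q.blocks.headI + q.length - 1) (q.length - 1) *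
          2 ^ (q.blocks.headI - 1) := by
  classical
  obtain ⟨a, l, hql⟩ : ∃ a l, q.blocks = a :: l := by
    cases hq : q.blocks with
    | nil =>
      exfalso
      have := q.blocks_sum
      rw [hq] at this
      simp at this
      omega
    | cons a l => exact ⟨a, l, rfl⟩
  have hhead : q.blocks.headI = a := by rw [hql]; rfl
  have htail : q.blocks.tail = l := by rw [hql]; rfl
  have hlen : q.length = l.length + 1 := by
    rw [← Composition.blocks_length, hql, List.length_cons]
  have ha : 0 < a := q.blocks_pos (by rw [hql]; exact List.mem_cons_self)
  have hq₁pos : 0 < q.blocks.headI := by rw [hhead]; exact ha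
  have hl : ∀ x ∈ q.blocks.tail, 0 < x := by
    intro x hx
    rw [htail] at hx
    exact q.blocks_pos (by rw [hql]; exact List.mem_cons_of_mem _ hx)
  have hsum : q.blocks.headI + q.blocks.tail.sum = b := by
    have hs := q.blocks_sum
    rw [hql, List.sum_cons] at hs
    rw [hhead, htail, hs]
  have hsplit : ∑ r : Composition b, embCount q r
      = 1 + ∑ c : Composition (q.blocks.headI + q.blocks.tail.length),
          (c.length).choose q.blocks.tail.length := by
    unfold embCount
    rw [Finset.sum_add_distrib]
    congr 1
    · rw [Finset.sum_eq_single q]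
      · simp
      · intro r _ hr
        exact if_neg (fun h => hr (Composition.ext h).symm)
      · intro h; exact absurd (Finset.mem_univ q) h
    · exact main_count hl hq₁pos hsum
  rw [hsplit, stepD (q.blocks.headI + q.blocks.tail.length)
    (by omega) q.blocks.tail.length]
  rw [hhead, htail, hlen]
  cases hK : l.length with
  | zero =>
    have e1 : a + 0 - 1 = a - 1 := by omega
    rw [e1, stepF0 a ha]
    have e2 : a + (0 + 1) - 1 = a := by omega
    have e3 : a + 2 * (0 + 1) - 2 = a := by omega
    have e4 : 0 + 1 - 1 = 0 := by omega
    rw [e2, e3, e4, Nat.choose_zero_right]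
    ring
  | succ s =>
    have e1 : a + (s + 1) - 1 = a + s := by omega
    have e2 : a + (s + 1 + 1) - 1 = a + s + 1 := by omega
    have e3 : s + 1 + 1 - 1 = s + 1 := by omega
    have e4 : a + 2 * (s + 1 + 1) - 2 = a + 2 * s + 2 := by omega
    rw [e1, e2, e3, e4, Nat.mul_add, Nat.mul_one]
    congr 1
    exact stepF a s ha
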